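/- Let K ⊆ ℝⁿ and V ⊆ ℝᵐ be nonempty closed convex sets, let ρ > 0, and let L : ℝⁿ × ℝᵐ → ℝ be continuously differentiable with L(·,y) convex for every y and L(x,·) concave for every x, and assume L admits at least one saddle point (x♯,y♯) ∈ K × V (i.e. L(x♯,y) ≤ L(x♯,y♯) ≤ L(x,y♯) for all x ∈ K, y ∈ V). Suppose x, z : [0,∞) → ℝⁿ and y, w : [0,∞) → ℝᵐ are differentiable curves with x(0), z(0) ∈ K, y(0), w(0) ∈ V, which for every t ≥ 0 satisfy the projected regularized saddle-flow dynamics ẋ(t) = Π_K[x(t), −∇ₓL(x(t),y(t)) − (x(t)−z(t))/ρ], ż(t) = Π_K[z(t), (x(t)−z(t))/ρ], ẏ(t) = Π_V[y(t), ∇_yL(x(t),y(t)) − (y(t)−w(t))/ρ], ẇ(t) = Π_V[w(t), (y(t)−w(t))/ρ], where each projected vector field exists as the stated one-sided limit. Then x(t) ∈ K and y(t) ∈ V for all t ≥ 0, and there exists a saddle point (x*,y*) of L on K × V such that (x(t), z(t), y(t), w(t)) → (x*, x*, y*, y*) as t → ∞. -/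

import Mathlib

open Filter Set

/-- Metric projection onto a set: the nearest point of `K` to `y`
(well defined when `K` is nonempty, closed and convex). -/
noncomputable def metricProj {E : Type*} [NormedAddCommGroup E] [InnerProductSpace ℝ E]
    (K : Set E) (y : E) : E :=
  Classical.epsilon fun p => p ∈ K ∧ ∀ z ∈ K, ‖y - p‖ ≤ ‖y - z‖

/-- `IsVFProj K x v w` : the vector field projection `Π_K[x,v]` exists and equals `w`,
i.e. `(Ψ_K(x + δ v) - x)/δ → w` as `δ → 0⁺`. -/
def IsVFProj {E : Type*} [NormedAddCommGroup E] [InnerProductSpace ℝ E]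
    (K : Set E) (x v w : E) : Prop :=
  Tendsto (fun δ : ℝ => δ⁻¹ • (metricProj K (x + δ • v) - x))
    (nhdsWithin 0 (Set.Ioi 0)) (nhds w)

/-- `IsSaddlePoint L K V x y` : `(x,y)` is a saddle point of `L` on `K × V`
(minimizing in `x`, maximizing in `y`). -/
def IsSaddlePoint {E F : Type*} (L : E → F → ℝ) (K : Set E) (V : Set F) (x : E) (y : F) : Prop :=
  x ∈ K ∧ y ∈ V ∧ ∀ x' ∈ K, ∀ y' ∈ V, L x y' ≤ L x y ∧ L x y ≤ L x' y

open intervalIntegral MeasureTheory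
open scoped RealInnerProductSpace

set_option linter.unusedSectionVars false
set_option linter.unusedTactic false
set_option maxHeartbeats 1000000

variable {E : Type*} [NormedAddCommGroup E] [InnerProductSpace ℝ E] [CompleteSpace E]

theorem metricProj_spec {K : Set E} (hne : K.Nonempty) (hcl : IsClosed K) (hcv : Convex ℝ K)
    (y : E) : metricProj K y ∈ K ∧ ∀ z ∈ K, ‖y - metricProj K y‖ ≤ ‖y - z‖ := by
  have h := exists_norm_eq_iInf_of_complete_convex hne (hcl.isComplete) hcv y
  obtain ⟨v, hv, hmin⟩ := h
  have : ∃ p, p ∈ K ∧ ∀ z ∈ K, ‖y - p‖ ≤ ‖y - z‖ := by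
    refine ⟨v, hv, fun z hz => ?_⟩
    rw [hmin]
    exact ciInf_le ⟨0, Set.forall_mem_range.2 fun _ => norm_nonneg _⟩ (⟨z, hz⟩ : K)
  exact Classical.epsilon_spec this

theorem metricProj_inner_le {K : Set E} (hne : K.Nonempty) (hcl : IsClosed K) (hcv : Convex ℝ K)
    (y : E) {q : E} (hq : q ∈ K) :
    ⟪y - metricProj K y, q - metricProj K y⟫ ≤ 0 := by
  obtain ⟨hmem, hmin⟩ := metricProj_spec hne hcl hcv y
  have : Nonempty K := hne.to_subtype
  have heq : ‖y - metricProj K y‖ = ⨅ w : K, ‖y - w‖ := by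
    refine le_antisymm (le_ciInf fun w => hmin w w.2) ?_
    exact ciInf_le ⟨0, Set.forall_mem_range.2 fun _ => norm_nonneg _⟩ (⟨_, hmem⟩ : K)
  exact (norm_eq_iInf_iff_real_inner_le_zero hcv hmem).1 heq q hq

theorem IsVFProj.mem {K : Set E} (hne : K.Nonempty) (hcl : IsClosed K) (hcv : Convex ℝ K)
    {x v d : E} (h : IsVFProj K x v d) : x ∈ K := by
  have h1 : Tendsto (fun δ : ℝ => δ • (δ⁻¹ • (metricProj K (x + δ • v) - x)))
      (nhdsWithin 0 (Set.Ioi 0)) (nhds ((0:ℝ) • d)) := by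
    exact Tendsto.smul (tendsto_nhdsWithin_of_tendsto_nhds tendsto_id) h
  have h2 : Tendsto (fun δ : ℝ => metricProj K (x + δ • v))
      (nhdsWithin 0 (Set.Ioi 0)) (nhds x) := by
    have : ∀ δ ∈ Set.Ioi (0:ℝ), δ • (δ⁻¹ • (metricProj K (x + δ • v) - x))
        = metricProj K (x + δ • v) - x := by
      intro δ hδ
      rw [smul_smul, mul_inv_cancel₀ (ne_of_gt hδ), one_smul]
    have h3 : Tendsto (fun δ : ℝ => metricProj K (x + δ • v) - x)
        (nhdsWithin 0 (Set.Ioi 0)) (nhds 0) := by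
      rw [zero_smul] at h1
      exact h1.congr' (eventually_nhdsWithin_of_forall this)
    have := h3.add_const x
    simpa using this
  have : x ∈ closure K := by
    refine mem_closure_of_tendsto h2 ?_
    filter_upwards with δ using (metricProj_spec hne hcl hcv _).1
  rwa [hcl.closure_eq] at this

theorem IsVFProj.inner_le {K : Set E} (hne : K.Nonempty) (hcl : IsClosed K) (hcv : Convex ℝ K)
    {x v d : E} (h : IsVFProj K x v d) {p : E} (hp : p ∈ K) :
    ⟪v - d, p - x⟫ ≤ 0 := by
  set u : ℝ → E := fun δ => δ⁻¹ • (metricProj K (x + δ • v) - x) with hu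
  have hgoal : Tendsto (fun δ : ℝ => ⟪v - u δ, (p - x) - δ • u δ⟫)
      (nhdsWithin 0 (Set.Ioi 0)) (nhds ⟪v - d, (p - x) - (0:ℝ) • d⟫) := by
    refine Tendsto.inner (tendsto_const_nhds.sub h) (tendsto_const_nhds.sub ?_)
    exact Tendsto.smul (tendsto_nhdsWithin_of_tendsto_nhds tendsto_id) h
  rw [zero_smul, sub_zero] at hgoal
  refine le_of_tendsto hgoal ?_
  filter_upwards [self_mem_nhdsWithin] with δ (hδ : 0 < δ)
  have hkey := metricProj_inner_le hne hcl hcv (x + δ • v) hp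
  have hPδ : metricProj K (x + δ • v) = x + δ • u δ := by
    rw [hu]; simp [smul_smul, mul_inv_cancel₀ (ne_of_gt hδ)]
  rw [hPδ] at hkey
  have e1 : x + δ • v - (x + δ • u δ) = δ • (v - u δ) := by
    rw [smul_sub]; abel
  have e2 : p - (x + δ • u δ) = (p - x) - δ • u δ := by abel
  rw [e1, e2, real_inner_smul_left] at hkey
  nlinarith [hkey]

theorem IsVFProj.inner_self {K : Set E} (hne : K.Nonempty) (hcl : IsClosed K) (hcv : Convex ℝ K)
    {x v d : E} (h : IsVFProj K x v d) : ⟪v - d, d⟫ ≥ 0 := by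
  set u : ℝ → E := fun δ => δ⁻¹ • (metricProj K (x + δ • v) - x) with hu
  have hgoal : Tendsto (fun δ : ℝ => ⟪v - u δ, u δ⟫)
      (nhdsWithin 0 (Set.Ioi 0)) (nhds ⟪v - d, d⟫) :=
    Tendsto.inner (tendsto_const_nhds.sub h) h
  refine ge_of_tendsto hgoal ?_
  filter_upwards [self_mem_nhdsWithin] with δ (hδ : 0 < δ)
  have hkey := metricProj_inner_le hne hcl hcv (x + δ • v) (h.mem hne hcl hcv)
  have hPδ : metricProj K (x + δ • v) = x + δ • u δ := by
    rw [hu]; simp [smul_smul, mul_inv_cancel₀ (ne_of_gt hδ)]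
  rw [hPδ] at hkey
  have e1 : x + δ • v - (x + δ • u δ) = δ • (v - u δ) := by
    rw [smul_sub]; abel
  have e2 : x - (x + δ • u δ) = -(δ • u δ) := by abel
  rw [e1, e2, real_inner_smul_left, inner_neg_right, real_inner_smul_right] at hkey
  nlinarith [hkey, mul_pos hδ hδ]

theorem IsVFProj.norm_le {K : Set E} (hne : K.Nonempty) (hcl : IsClosed K) (hcv : Convex ℝ K)
    {x v d : E} (h : IsVFProj K x v d) : ‖d‖ ≤ ‖v‖ := by
  have h1 := h.inner_self hne hcl hcv
  rw [inner_sub_left, real_inner_self_eq_norm_sq] at h1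
  have h2 : ⟪v, d⟫ ≤ ‖v‖ * ‖d‖ := real_inner_le_norm v d
  nlinarith [norm_nonneg d, norm_nonneg v]

variable {E : Type*} [NormedAddCommGroup E] [InnerProductSpace ℝ E] [CompleteSpace E]

theorem ConvexOn.inner_grad_le {f : E → ℝ} (hf : ConvexOn ℝ Set.univ f)
    {g a : E} (hg : HasGradientAt f g a) (b : E) : f a + ⟪g, b - a⟫ ≤ f b := by
  rcases eq_or_ne b a with rfl | hba
  · simp
  · set φ : ℝ → ℝ := fun t => f (a + t • (b - a)) with hφ
    have hline : ∀ t : ℝ, HasDerivAt (fun s : ℝ => a + s • (b - a)) (b - a) t := by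
      intro t
      simpa using ((hasDerivAt_id t).smul_const (b - a)).const_add a
    have hconv : ConvexOn ℝ Set.univ φ := by
      have := hf.comp_affineMap (AffineMap.lineMap a b : ℝ →ᵃ[ℝ] E)
      have heq : ∀ t : ℝ, φ t = (f ∘ (AffineMap.lineMap a b : ℝ →ᵃ[ℝ] E)) t := by
        intro t
        have harg : (AffineMap.lineMap a b : ℝ →ᵃ[ℝ] E) t = a + t • (b - a) := by
          rw [AffineMap.lineMap_apply_module]
          module
        simp [hφ, Function.comp, harg]
      have hpre : (AffineMap.lineMap a b : ℝ →ᵃ[ℝ] E) ⁻¹' Set.univ = Set.univ := by simp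
      rw [hpre] at this
      exact this.congr (fun t _ => (heq t).symm)
    have hder : HasDerivAt φ ⟪g, b - a⟫ 0 := by
      have hF : HasFDerivAt f (InnerProductSpace.toDual ℝ E g : E →L[ℝ] ℝ) a := hg
      have hl0 : HasDerivAt (fun s : ℝ => a + s • (b - a)) (b - a) 0 := hline 0
      have hF' : HasFDerivAt f (InnerProductSpace.toDual ℝ E g : E →L[ℝ] ℝ)
          (a + (0:ℝ) • (b - a)) := by simpa using hF
      have := hF'.comp_hasDerivAt (0 : ℝ) hl0
      simpa [hφ, Function.comp_def, InnerProductSpace.toDual_apply_apply] using this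
    have hslope := hconv.le_slope_of_hasDerivAt (Set.mem_univ 0) (Set.mem_univ 1)
      zero_lt_one hder
    rw [slope_def_field] at hslope
    have h0 : φ 0 = f a := by simp [hφ]
    have h1 : φ 1 = f b := by simp [hφ]
    rw [h0, h1] at hslope
    have : ⟪g, b - a⟫ ≤ f b - f a := by
      simpa using hslope
    linarith

theorem ConcaveOn.inner_grad_ge {f : E → ℝ} (hf : ConcaveOn ℝ Set.univ f)
    {g a : E} (hg : HasGradientAt f g a) (b : E) : f b ≤ f a + ⟪g, b - a⟫ := by
  have hneg : ConvexOn ℝ Set.univ (fun u => -f u) := hf.neg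
  have hgneg : HasGradientAt (fun u => -f u) (-g) a := by
    have hF : HasFDerivAt f (InnerProductSpace.toDual ℝ E g : E →L[ℝ] ℝ) a := hg
    have hFn := hF.neg
    have : HasFDerivAt (fun u => -f u) (InnerProductSpace.toDual ℝ E (-g) : E →L[ℝ] ℝ) a := by
      have e : (InnerProductSpace.toDual ℝ E (-g) : E →L[ℝ] ℝ) = -(InnerProductSpace.toDual ℝ E g) := by
        ext v
        simp [InnerProductSpace.toDual_apply_apply, inner_neg_left]
      rw [e]; exact hFn
    exact this
  have := hneg.inner_grad_le hgneg b
  simp only [inner_neg_left] at this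
  linarith

/-- Comparison: if `f' t ≤ g t` on `(0,∞)` then `f t - f s ≤ ∫ g` for `0 ≤ s ≤ t`. -/
theorem sub_le_integral_of_deriv_le {f f' g : ℝ → ℝ}
    (hf : ∀ t ∈ Ici (0:ℝ), HasDerivAt f (f' t) t)
    (hg : ContinuousOn g (Ici 0))
    (hle : ∀ t ∈ Ioi (0:ℝ), f' t ≤ g t)
    {s t : ℝ} (hs : 0 ≤ s) (hst : s ≤ t) :
    f t - f s ≤ ∫ u in s..t, g u := by
  rcases eq_or_lt_of_le hst with rfl | hlt
  · simp
  set F : ℝ → ℝ := fun u => f u - ∫ v in s..u, g v with hF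
  have hIcc_sub : Icc s t ⊆ Ici (0:ℝ) := fun u hu => le_trans hs hu.1
  have hganti : AntitoneOn F (Icc s t) := by
    apply antitoneOn_of_deriv_nonpos (convex_Icc s t)
    · apply ContinuousOn.sub
      · intro u hu
        exact ((hf u (hIcc_sub hu)).continuousAt).continuousWithinAt
      · have h1 : IntegrableOn g (uIcc s t) := by
          rw [uIcc_of_le hst]
          exact (hg.mono hIcc_sub).integrableOn_Icc
        have := continuousOn_primitive_interval (μ := volume) (a := s) (b := t) h1
        rwa [uIcc_of_le hst] at this
    · rw [interior_Icc]
      intro u hu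
      have hu0 : (0:ℝ) < u := lt_of_le_of_lt hs hu.1
      have hD : HasDerivAt F (f' u - g u) u := by
        refine (hf u (le_of_lt hu0)).sub ?_
        apply integral_hasDerivAt_right
        · apply ContinuousOn.intervalIntegrable
          apply hg.mono
          rw [uIcc_of_le (le_of_lt hu.1)]
          exact fun v hv => le_trans hs hv.1
        · exact (hg.mono Ioi_subset_Ici_self).stronglyMeasurableAtFilter isOpen_Ioi u hu0
        · exact (hg.mono Ioi_subset_Ici_self).continuousAt (Ioi_mem_nhds hu0)
      exact hD.differentiableAt.differentiableWithinAt
    · rw [interior_Icc]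
      intro u hu
      have hu0 : (0:ℝ) < u := lt_of_le_of_lt hs hu.1
      have hD : HasDerivAt F (f' u - g u) u := by
        refine (hf u (le_of_lt hu0)).sub ?_
        apply integral_hasDerivAt_right
        · apply ContinuousOn.intervalIntegrable
          apply hg.mono
          rw [uIcc_of_le (le_of_lt hu.1)]
          exact fun v hv => le_trans hs hv.1
        · exact (hg.mono Ioi_subset_Ici_self).stronglyMeasurableAtFilter isOpen_Ioi u hu0
        · exact (hg.mono Ioi_subset_Ici_self).continuousAt (Ioi_mem_nhds hu0)
      rw [hD.deriv]
      have := hle u hu0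
      linarith
  have h1 := hganti (left_mem_Icc.2 hst) (right_mem_Icc.2 hst) hst
  simp only [hF, intervalIntegral.integral_same, sub_zero] at h1
  linarith

theorem barbalat {S : ℝ → ℝ} {M C : ℝ} (hM : 0 < M)
    (hS0 : ∀ t ∈ Ici (0:ℝ), 0 ≤ S t)
    (hcont : ContinuousOn S (Ici 0))
    (hLip : ∀ s ∈ Ici (0:ℝ), ∀ t ∈ Ici (0:ℝ), |S t - S s| ≤ M * |t - s|)
    (hInt : ∀ T ∈ Ici (0:ℝ), (∫ u in (0:ℝ)..T, S u) ≤ C) :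
    Tendsto S atTop (nhds 0) := by
  have hintS : ∀ a b : ℝ, 0 ≤ a → 0 ≤ b → IntervalIntegrable S MeasureTheory.volume a b := by
    intro a b ha hb
    apply ContinuousOn.intervalIntegrable
    apply hcont.mono
    intro u hu
    rcases le_total a b with h | h
    · rw [uIcc_of_le h] at hu; exact le_trans ha hu.1
    · rw [uIcc_of_ge h] at hu; exact le_trans hb hu.1
  rw [Metric.tendsto_atTop]
  by_contra hcon
  push_neg at hcon
  obtain ⟨ε, hε, hbad0⟩ := hcon
  have hbad : ∀ N : ℝ, ∃ t, N ≤ t ∧ 0 ≤ t ∧ ε ≤ S t := by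
    intro N
    obtain ⟨t, ht1, ht2⟩ := hbad0 (max N 0)
    have ht0 : 0 ≤ t := le_trans (le_max_right N 0) ht1
    refine ⟨t, le_trans (le_max_left N 0) ht1, ht0, ?_⟩
    rw [Real.dist_eq, sub_zero, abs_of_nonneg (hS0 t ht0)] at ht2
    exact ht2
  set δ : ℝ := ε / (2 * M) with hδdef
  have hδpos : 0 < δ := div_pos hε (by linarith)
  set c : ℝ := δ * (ε / 2) with hcdef
  have hcpos : 0 < c := mul_pos hδpos (by linarith)
  -- key lower bound on each interval
  have key : ∀ t₀ : ℝ, 0 ≤ t₀ → ε ≤ S t₀ → c ≤ ∫ u in t₀..(t₀ + δ), S u := by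
    intro t₀ ht₀ hSt₀
    have hlow : ∀ u ∈ Icc t₀ (t₀ + δ), ε / 2 ≤ S u := by
      intro u hu
      have hu0 : 0 ≤ u := le_trans ht₀ hu.1
      have := hLip t₀ ht₀ u hu0
      have habs : |u - t₀| ≤ δ := by
        rw [abs_of_nonneg (by linarith [hu.1])]
        linarith [hu.2]
      have hMδ : M * |u - t₀| ≤ M * δ := by
        apply mul_le_mul_of_nonneg_left habs (le_of_lt hM)
      have hMδ2 : M * δ = ε / 2 := by
        have hM0 : M ≠ 0 := ne_of_gt hM
        rw [hδdef]; field_simp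
      have h1 : |S u - S t₀| ≤ ε / 2 := by
        calc |S u - S t₀| ≤ M * |u - t₀| := this
          _ ≤ M * δ := hMδ
          _ = ε / 2 := hMδ2
      have := abs_le.1 h1
      linarith [this.1]
    calc c = ((t₀ + δ) - t₀) • (ε / 2) := by
            rw [smul_eq_mul, hcdef]; ring
      _ = ∫ _ in t₀..(t₀ + δ), (ε / 2) := by rw [intervalIntegral.integral_const]
      _ ≤ ∫ u in t₀..(t₀ + δ), S u := by
          apply intervalIntegral.integral_mono_on (by linarith)
            intervalIntegrable_const (hintS t₀ (t₀ + δ) ht₀ (by linarith)) hlow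
  -- recursively build the sequence
  have hrec : ∀ k : ℕ, ∃ g : ℝ, 0 ≤ g ∧ ε ≤ S g ∧ ((k:ℝ) + 1) * c ≤ ∫ u in (0:ℝ)..(g + δ), S u := by
    intro k
    induction k with
    | zero =>
      obtain ⟨t, _, ht0, htS⟩ := hbad 0
      refine ⟨t, ht0, htS, ?_⟩
      have hsplit := integral_add_adjacent_intervals (hintS 0 t le_rfl ht0)
        (hintS t (t + δ) ht0 (by linarith))
      have hnn : 0 ≤ ∫ u in (0:ℝ)..t, S u := by
        apply intervalIntegral.integral_nonneg ht0
        intro u hu; exact hS0 u hu.1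
      have hk := key t ht0 htS
      push_cast
      linarith [hsplit, hnn, hk]
    | succ k ih =>
      obtain ⟨g, hg0, hgS, hgI⟩ := ih
      obtain ⟨t, ht1, ht0, htS⟩ := hbad (g + δ)
      refine ⟨t, ht0, htS, ?_⟩
      have hsplit1 := integral_add_adjacent_intervals (hintS 0 (g + δ) le_rfl (by linarith))
        (hintS (g + δ) t (by linarith) ht0)
      have hsplit2 := integral_add_adjacent_intervals (hintS 0 t le_rfl ht0)
        (hintS t (t + δ) ht0 (by linarith))
      have hmid : 0 ≤ ∫ u in (g + δ)..t, S u := by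
        apply intervalIntegral.integral_nonneg ht1
        intro u hu; exact hS0 u (le_trans (by linarith) hu.1)
      have hk := key t ht0 htS
      push_cast
      push_cast at hgI
      linarith [hsplit1, hsplit2, hmid, hk, hgI]
  obtain ⟨k, hk⟩ := exists_nat_gt (C / c)
  obtain ⟨g, hg0, _, hgI⟩ := hrec k
  have h1 : C < ((k:ℝ) + 1) * c := by
    have : C / c < (k:ℝ) + 1 := by linarith
    calc C = (C / c) * c := by field_simp
      _ < ((k:ℝ) + 1) * c := by exact mul_lt_mul_of_pos_right this hcpos
  have h2 := hInt (g + δ) (by simp; linarith)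
  linarith

variable {E F : Type*} [NormedAddCommGroup E] [InnerProductSpace ℝ E] [CompleteSpace E]
  [NormedAddCommGroup F] [InnerProductSpace ℝ F] [CompleteSpace F]

theorem grad_fst_hasGradientAt (L : E → F → ℝ)
    (hL : ContDiff ℝ 1 (fun p : E × F => L p.1 p.2)) (a : E) (b : F) :
    HasGradientAt (fun u => L u b) (gradient (fun u => L u b) a) a := by
  have hdiff : Differentiable ℝ (fun p : E × F => L p.1 p.2) := hL.differentiable one_ne_zero
  have h1 : DifferentiableAt ℝ (fun u : E => L u b) a := by
    have := (hdiff (a, b)).comp a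
      ((differentiableAt_id.prodMk (differentiableAt_const b)) :
        DifferentiableAt ℝ (fun u : E => (u, b)) a)
    exact this
  exact h1.hasGradientAt

theorem grad_snd_hasGradientAt (L : E → F → ℝ)
    (hL : ContDiff ℝ 1 (fun p : E × F => L p.1 p.2)) (a : E) (b : F) :
    HasGradientAt (fun v => L a v) (gradient (fun v => L a v) b) b := by
  have hdiff : Differentiable ℝ (fun p : E × F => L p.1 p.2) := hL.differentiable one_ne_zero
  have h1 : DifferentiableAt ℝ (fun v : F => L a v) b := by
    have := (hdiff (a, b)).comp b
      (((differentiableAt_const a).prodMk differentiableAt_id) :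
        DifferentiableAt ℝ (fun v : F => (a, v)) b)
    exact this
  exact h1.hasGradientAt

theorem grad_fst_continuous (L : E → F → ℝ)
    (hL : ContDiff ℝ 1 (fun p : E × F => L p.1 p.2)) :
    Continuous (fun p : E × F => gradient (fun u => L u p.2) p.1) := by
  have hdiff : Differentiable ℝ (fun p : E × F => L p.1 p.2) := hL.differentiable one_ne_zero
  have hkey : ∀ p : E × F, gradient (fun u => L u p.2) p.1 =
      (InnerProductSpace.toDual ℝ E).symm
        (((fderiv ℝ (fun p : E × F => L p.1 p.2) p).comp
          (ContinuousLinearMap.inl ℝ E F))) := by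
    intro p
    have hF : HasFDerivAt (fun u : E => L u p.2)
        ((fderiv ℝ (fun p : E × F => L p.1 p.2) p).comp (ContinuousLinearMap.inl ℝ E F)) p.1 := by
      have := ((hdiff (p.1, p.2)).hasFDerivAt).comp p.1 (hasFDerivAt_prodMk_left (𝕜 := ℝ) p.1 p.2)
      exact this
    rw [gradient, hF.fderiv]
  rw [funext hkey]
  apply (LinearIsometryEquiv.continuous _).comp
  exact (((ContinuousLinearMap.compL ℝ E (E × F) ℝ).flip
    (ContinuousLinearMap.inl ℝ E F)).continuous).comp (hL.continuous_fderiv one_ne_zero)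

theorem grad_snd_continuous (L : E → F → ℝ)
    (hL : ContDiff ℝ 1 (fun p : E × F => L p.1 p.2)) :
    Continuous (fun p : E × F => gradient (fun v => L p.1 v) p.2) := by
  have hdiff : Differentiable ℝ (fun p : E × F => L p.1 p.2) := hL.differentiable one_ne_zero
  have hkey : ∀ p : E × F, gradient (fun v => L p.1 v) p.2 =
      (InnerProductSpace.toDual ℝ F).symm
        (((fderiv ℝ (fun p : E × F => L p.1 p.2) p).comp
          (ContinuousLinearMap.inr ℝ E F))) := by
    intro p
    have hF : HasFDerivAt (fun v : F => L p.1 v)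
        ((fderiv ℝ (fun p : E × F => L p.1 p.2) p).comp (ContinuousLinearMap.inr ℝ E F)) p.2 := by
      have := ((hdiff (p.1, p.2)).hasFDerivAt).comp p.2 (hasFDerivAt_prodMk_right (𝕜 := ℝ) p.1 p.2)
      exact this
    rw [gradient, hF.fderiv]
  rw [funext hkey]
  apply (LinearIsometryEquiv.continuous _).comp
  exact (((ContinuousLinearMap.compL ℝ F (E × F) ℝ).flip
    (ContinuousLinearMap.inr ℝ E F)).continuous).comp (hL.continuous_fderiv one_ne_zero)

/-- If along a sequence of unit-length windows going to infinity the curve `x` converges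
uniformly to `x̄` and the field `v` converges uniformly to `v̄`, and `⟪ẋ, x - p⟫ ≤ ⟪v, x - p⟫`,
then `0 ≤ ⟪v̄, x̄ - p⟫`. -/
theorem limit_vi {E : Type*} [NormedAddCommGroup E] [InnerProductSpace ℝ E]
    {x dx v : ℝ → E} {p : E}
    (hdx : ∀ t ∈ Ici (0:ℝ), HasDerivAt x (dx t) t)
    (hVI : ∀ t ∈ Ici (0:ℝ), ⟪dx t, x t - p⟫ ≤ ⟪v t, x t - p⟫)
    (hvcont : ContinuousOn v (Ici 0))
    {tk : ℕ → ℝ} (htk0 : ∀ k, 0 ≤ tk k)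
    {xb vb : E}
    (hxU : ∀ ε > 0, ∀ᶠ k in atTop, ∀ s ∈ Icc (tk k) (tk k + 1), ‖x s - xb‖ ≤ ε)
    (hvU : ∀ ε > 0, ∀ᶠ k in atTop, ∀ s ∈ Icc (tk k) (tk k + 1), ‖v s - vb‖ ≤ ε) :
    0 ≤ ⟪vb, xb - p⟫ := by
  have hxcont : ContinuousOn x (Ici 0) := fun t ht => (hdx t ht).continuousAt.continuousWithinAt
  set q : ℝ → ℝ := fun t => ⟪x t - p, x t - p⟫ with hq
  have hqd : ∀ t ∈ Ici (0:ℝ), HasDerivAt q (2 * ⟪dx t, x t - p⟫) t := by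
    intro t ht
    have h1 : HasDerivAt (fun s => x s - p) (dx t) t := (hdx t ht).sub_const p
    have := h1.inner ℝ h1
    exact this.congr_deriv (by rw [real_inner_comm]; ring)
  set h : ℝ → ℝ := fun s => 2 * ⟪v s, x s - p⟫ with hh
  have hhcont : ContinuousOn h (Ici 0) := by
    apply ContinuousOn.mul continuousOn_const
    exact ContinuousOn.inner hvcont (hxcont.sub continuousOn_const)
  -- the key per-window inequality
  have hkey : ∀ k : ℕ, q (tk k + 1) - q (tk k) ≤ ∫ s in (tk k)..(tk k + 1), h s := by
    intro k
    apply sub_le_integral_of_deriv_le (f' := fun t => 2 * ⟪dx t, x t - p⟫) hqd hhcont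
    · intro t ht
      have := hVI t (mem_Ici.2 (le_of_lt ht))
      simp only [hh]
      linarith
    · exact htk0 k
    · linarith
  -- x (tk k) → xb and x (tk k + 1) → xb
  have hx0 : Tendsto (fun k => x (tk k)) atTop (nhds xb) := by
    rw [Metric.tendsto_atTop]
    intro ε hε
    have := hxU (ε/2) (by linarith)
    rw [eventually_atTop] at this
    obtain ⟨N, hN⟩ := this
    refine ⟨N, fun k hk => ?_⟩
    have := hN k hk (tk k) ⟨le_refl _, by linarith⟩
    rw [dist_eq_norm]
    linarith
  have hx1 : Tendsto (fun k => x (tk k + 1)) atTop (nhds xb) := by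
    rw [Metric.tendsto_atTop]
    intro ε hε
    have := hxU (ε/2) (by linarith)
    rw [eventually_atTop] at this
    obtain ⟨N, hN⟩ := this
    refine ⟨N, fun k hk => ?_⟩
    have := hN k hk (tk k + 1) ⟨by linarith, le_refl _⟩
    rw [dist_eq_norm]
    linarith
  -- the difference tends to 0
  have hA : Tendsto (fun k => q (tk k + 1) - q (tk k)) atTop (nhds 0) := by
    have h1 : Tendsto (fun k => q (tk k + 1)) atTop (nhds ⟪xb - p, xb - p⟫) :=
      Tendsto.inner (hx1.sub tendsto_const_nhds) (hx1.sub tendsto_const_nhds)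
    have h2 : Tendsto (fun k => q (tk k)) atTop (nhds ⟪xb - p, xb - p⟫) :=
      Tendsto.inner (hx0.sub tendsto_const_nhds) (hx0.sub tendsto_const_nhds)
    have := h1.sub h2
    simpa using this
  -- the integral tends to 2⟪vb, xb - p⟫
  set hbar : ℝ := 2 * ⟪vb, xb - p⟫ with hhbar
  have hI : Tendsto (fun k => ∫ s in (tk k)..(tk k + 1), h s) atTop (nhds hbar) := by
    rw [Metric.tendsto_atTop]
    intro ε hε
    set D : ℝ := 2 * (‖xb - p‖ + 1 + ‖vb‖) + 1 with hD
    have hDpos : 0 < D := by positivity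
    set ε' : ℝ := min 1 (ε / (2 * D)) with hε'
    have hε'pos : 0 < ε' := lt_min one_pos (by positivity)
    have h1 := hxU ε' hε'pos
    have h2 := hvU ε' hε'pos
    rw [eventually_atTop] at h1 h2
    obtain ⟨N1, hN1⟩ := h1
    obtain ⟨N2, hN2⟩ := h2
    refine ⟨max N1 N2, fun k hk => ?_⟩
    have hk1 := hN1 k (le_trans (le_max_left _ _) hk)
    have hk2 := hN2 k (le_trans (le_max_right _ _) hk)
    -- pointwise bound on the window
    have hpt : ∀ s ∈ Icc (tk k) (tk k + 1), ‖h s - hbar‖ ≤ ε' * D := by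
      intro s hs
      have e1 := hk1 s hs
      have e2 := hk2 s hs
      have expand : h s - hbar = 2 * ⟪v s - vb, x s - p⟫ + 2 * ⟪vb, x s - xb⟫ := by
        have e : ⟪vb, x s - xb⟫ = ⟪vb, x s - p⟫ - ⟪vb, xb - p⟫ := by
          rw [← inner_sub_right]
          congr 1
          abel
        simp only [hh, hhbar, inner_sub_left, e]
        ring
      have b1 : |⟪v s - vb, x s - p⟫| ≤ ε' * (‖xb - p‖ + 1) := by
        calc |⟪v s - vb, x s - p⟫| ≤ ‖v s - vb‖ * ‖x s - p‖ := abs_real_inner_le_norm _ _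
          _ ≤ ε' * (‖xb - p‖ + 1) := by
            apply mul_le_mul e2 ?_ (norm_nonneg _) (le_of_lt hε'pos)
            have : x s - p = (x s - xb) + (xb - p) := by abel
            rw [this]
            calc ‖(x s - xb) + (xb - p)‖ ≤ ‖x s - xb‖ + ‖xb - p‖ := norm_add_le _ _
              _ ≤ ε' + ‖xb - p‖ := by linarith
              _ ≤ ‖xb - p‖ + 1 := by
                have : ε' ≤ 1 := min_le_left _ _
                linarith
      have b2 : |⟪vb, x s - xb⟫| ≤ ‖vb‖ * ε' := by
        calc |⟪vb, x s - xb⟫| ≤ ‖vb‖ * ‖x s - xb‖ := abs_real_inner_le_norm _ _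
          _ ≤ ‖vb‖ * ε' := mul_le_mul_of_nonneg_left e1 (norm_nonneg _)
      rw [expand]
      have : |2 * ⟪v s - vb, x s - p⟫ + 2 * ⟪vb, x s - xb⟫| ≤
          2 * |⟪v s - vb, x s - p⟫| + 2 * |⟪vb, x s - xb⟫| := by
        calc _ ≤ |2 * ⟪v s - vb, x s - p⟫| + |2 * ⟪vb, x s - xb⟫| := abs_add_le _ _
          _ = 2 * |⟪v s - vb, x s - p⟫| + 2 * |⟪vb, x s - xb⟫| := by
            rw [abs_mul, abs_mul]; norm_num
      rw [Real.norm_eq_abs]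
      calc |2 * ⟪v s - vb, x s - p⟫ + 2 * ⟪vb, x s - xb⟫| ≤
          2 * |⟪v s - vb, x s - p⟫| + 2 * |⟪vb, x s - xb⟫| := this
        _ ≤ 2 * (ε' * (‖xb - p‖ + 1)) + 2 * (‖vb‖ * ε') := by linarith
        _ = ε' * (2 * (‖xb - p‖ + 1 + ‖vb‖)) := by ring
        _ ≤ ε' * D := by
          apply mul_le_mul_of_nonneg_left ?_ (le_of_lt hε'pos)
          rw [hD]; linarith
    -- integral bound
    have hIcc : Icc (tk k) (tk k + 1) ⊆ Ici (0:ℝ) := fun u hu => le_trans (htk0 k) hu.1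
    have hint : IntervalIntegrable h MeasureTheory.volume (tk k) (tk k + 1) := by
      apply ContinuousOn.intervalIntegrable
      apply hhcont.mono
      rwa [uIcc_of_le (by linarith)]
    have heq : (∫ s in (tk k)..(tk k + 1), h s) - hbar
        = ∫ s in (tk k)..(tk k + 1), (h s - hbar) := by
      rw [intervalIntegral.integral_sub hint intervalIntegrable_const,
        intervalIntegral.integral_const]
      simp
    rw [dist_eq_norm, heq]
    have hbound := intervalIntegral.norm_integral_le_of_norm_le_const
      (f := fun s => h s - hbar) (C := ε' * D) (a := tk k) (b := tk k + 1) ?_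
    · calc ‖∫ s in (tk k)..(tk k + 1), (h s - hbar)‖ ≤ ε' * D * |tk k + 1 - tk k| := hbound
        _ = ε' * D := by simp
        _ ≤ (ε / (2 * D)) * D := by
          apply mul_le_mul_of_nonneg_right (min_le_right _ _) (le_of_lt hDpos)
        _ = ε / 2 := by field_simp
        _ < ε := by linarith
    · intro u hu
      apply hpt
      rw [uIoc_of_le (by linarith : tk k ≤ tk k + 1)] at hu
      exact ⟨le_of_lt hu.1, hu.2⟩
  have hfinal : (0:ℝ) ≤ hbar := le_of_tendsto_of_tendsto' hA hI hkey
  rw [hhbar] at hfinal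
  linarith

theorem hasDerivAt_inner_self' {E : Type*} [NormedAddCommGroup E] [InnerProductSpace ℝ E]
    {c : ℝ → E} {c' : E} {t : ℝ} (h : HasDerivAt c c' t) :
    HasDerivAt (fun s => ⟪c s, c s⟫) (2 * ⟪c', c t⟫) t := by
  have := h.inner ℝ h
  exact this.congr_deriv (by rw [real_inner_comm]; ring)

theorem vi_flip {E : Type*} [NormedAddCommGroup E] [InnerProductSpace ℝ E]
    {v d xx pp : E} (h : ⟪v - d, pp - xx⟫ ≤ 0) : ⟪d, xx - pp⟫ ≤ ⟪v, xx - pp⟫ := by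
  rw [inner_sub_left] at h
  have e1 : ⟪v, pp - xx⟫ = -⟪v, xx - pp⟫ := by
    rw [show pp - xx = -(xx - pp) by abel, inner_neg_right]
  have e2 : ⟪d, pp - xx⟫ = -⟪d, xx - pp⟫ := by
    rw [show pp - xx = -(xx - pp) by abel, inner_neg_right]
  rw [e1, e2] at h
  linarith

/-- **Theorem 1 (convergence of projected regularized saddle-flow dynamics).**
If `K ⊆ ℝⁿ`, `V ⊆ ℝᵐ` are nonempty closed convex sets, `L` is continuously differentiable,
convex in `x` and concave in `y`, and has a saddle point on `K × V`, then any trajectory of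
the projected regularized saddle-flow dynamics initialized in `K × K × V × V` stays in
`K` (resp. `V`) and converges to a point `(x*, x*, y*, y*)` where `(x*,y*)` is a saddle
point of `L` on `K × V`. -/
theorem saddle_flow_convergence
    {n m : ℕ} (K : Set (EuclideanSpace ℝ (Fin n))) (V : Set (EuclideanSpace ℝ (Fin m)))
    (hKne : K.Nonempty) (hKcl : IsClosed K) (hKcv : Convex ℝ K)
    (hVne : V.Nonempty) (hVcl : IsClosed V) (hVcv : Convex ℝ V)
    (ρ : ℝ) (hρ : 0 < ρ)
    (L : EuclideanSpace ℝ (Fin n) → EuclideanSpace ℝ (Fin m) → ℝ)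
    (hL : ContDiff ℝ 1 (fun p : EuclideanSpace ℝ (Fin n) × EuclideanSpace ℝ (Fin m) =>
      L p.1 p.2))
    (hconv : ∀ y, ConvexOn ℝ Set.univ (fun x => L x y))
    (hconc : ∀ x, ConcaveOn ℝ Set.univ (fun y => L x y))
    (hsaddle : ∃ xs ys, IsSaddlePoint L K V xs ys)
    (x z : ℝ → EuclideanSpace ℝ (Fin n)) (y w : ℝ → EuclideanSpace ℝ (Fin m))
    (hx0 : x 0 ∈ K) (hz0 : z 0 ∈ K) (hy0 : y 0 ∈ V) (hw0 : w 0 ∈ V)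
    (hxdyn : ∀ t : ℝ, 0 ≤ t → ∃ d, IsVFProj K (x t)
      (-(gradient (fun u => L u (y t)) (x t)) - ρ⁻¹ • (x t - z t)) d ∧ HasDerivAt x d t)
    (hzdyn : ∀ t : ℝ, 0 ≤ t → ∃ d, IsVFProj K (z t) (ρ⁻¹ • (x t - z t)) d ∧ HasDerivAt z d t)
    (hydyn : ∀ t : ℝ, 0 ≤ t → ∃ d, IsVFProj V (y t)
      ((gradient (fun u => L (x t) u) (y t)) - ρ⁻¹ • (y t - w t)) d ∧ HasDerivAt y d t)
    (hwdyn : ∀ t : ℝ, 0 ≤ t → ∃ d, IsVFProj V (w t) (ρ⁻¹ • (y t - w t)) d ∧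
      HasDerivAt w d t) :
    (∀ t : ℝ, 0 ≤ t → x t ∈ K ∧ y t ∈ V) ∧
    ∃ xs ys, IsSaddlePoint L K V xs ys ∧
      Tendsto (fun t => (x t, z t, y t, w t)) atTop (nhds (xs, xs, ys, ys)) := by
  classical
  obtain ⟨a, b, habK, hbV, hsp⟩ :
      ∃ a b, a ∈ K ∧ b ∈ V ∧ ∀ x' ∈ K, ∀ y' ∈ V, L a y' ≤ L a b ∧ L a b ≤ L x' b := by
    obtain ⟨a, b, h1, h2, h3⟩ := hsaddle
    exact ⟨a, b, h1, h2, h3⟩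
  set G : EuclideanSpace ℝ (Fin n) × EuclideanSpace ℝ (Fin m) → EuclideanSpace ℝ (Fin n) :=
    fun p => gradient (fun u => L u p.2) p.1 with hGdef
  set H : EuclideanSpace ℝ (Fin n) × EuclideanSpace ℝ (Fin m) → EuclideanSpace ℝ (Fin m) :=
    fun p => gradient (fun v => L p.1 v) p.2 with hHdef
  have hGcont : Continuous G := grad_fst_continuous L hL
  have hHcont : Continuous H := grad_snd_continuous L hL
  have hGgrad : ∀ (c : EuclideanSpace ℝ (Fin n)) (d : EuclideanSpace ℝ (Fin m)),
      HasGradientAt (fun u => L u d) (G (c, d)) c := fun c d => grad_fst_hasGradientAt L hL c d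
  have hHgrad : ∀ (c : EuclideanSpace ℝ (Fin n)) (d : EuclideanSpace ℝ (Fin m)),
      HasGradientAt (fun v => L c v) (H (c, d)) d := fun c d => grad_snd_hasGradientAt L hL c d
  -- choose the derivatives
  have hxch : ∀ t : ℝ, ∃ d, 0 ≤ t →
      IsVFProj K (x t) (-(G (x t, y t)) - ρ⁻¹ • (x t - z t)) d ∧ HasDerivAt x d t := by
    intro t
    by_cases ht : 0 ≤ t
    · obtain ⟨d, hd⟩ := hxdyn t ht
      exact ⟨d, fun _ => hd⟩
    · exact ⟨0, fun h => absurd h ht⟩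
  have hzch : ∀ t : ℝ, ∃ d, 0 ≤ t →
      IsVFProj K (z t) (ρ⁻¹ • (x t - z t)) d ∧ HasDerivAt z d t := by
    intro t
    by_cases ht : 0 ≤ t
    · obtain ⟨d, hd⟩ := hzdyn t ht
      exact ⟨d, fun _ => hd⟩
    · exact ⟨0, fun h => absurd h ht⟩
  have hych : ∀ t : ℝ, ∃ d, 0 ≤ t →
      IsVFProj V (y t) ((H (x t, y t)) - ρ⁻¹ • (y t - w t)) d ∧ HasDerivAt y d t := by
    intro t
    by_cases ht : 0 ≤ t
    · obtain ⟨d, hd⟩ := hydyn t ht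
      exact ⟨d, fun _ => hd⟩
    · exact ⟨0, fun h => absurd h ht⟩
  have hwch : ∀ t : ℝ, ∃ d, 0 ≤ t →
      IsVFProj V (w t) (ρ⁻¹ • (y t - w t)) d ∧ HasDerivAt w d t := by
    intro t
    by_cases ht : 0 ≤ t
    · obtain ⟨d, hd⟩ := hwdyn t ht
      exact ⟨d, fun _ => hd⟩
    · exact ⟨0, fun h => absurd h ht⟩
  choose dx hdx using hxch
  choose dz hdz using hzch
  choose dy hdy using hych
  choose dw hdw using hwch
  -- membership
  have hxK : ∀ t, 0 ≤ t → x t ∈ K := fun t ht => ((hdx t ht).1).mem hKne hKcl hKcv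
  have hzK : ∀ t, 0 ≤ t → z t ∈ K := fun t ht => ((hdz t ht).1).mem hKne hKcl hKcv
  have hyV : ∀ t, 0 ≤ t → y t ∈ V := fun t ht => ((hdy t ht).1).mem hVne hVcl hVcv
  have hwV : ∀ t, 0 ≤ t → w t ∈ V := fun t ht => ((hdw t ht).1).mem hVne hVcl hVcv
  -- continuity on [0, ∞)
  have hxc : ContinuousOn x (Ici 0) := fun t ht => ((hdx t ht).2).continuousAt.continuousWithinAt
  have hzc : ContinuousOn z (Ici 0) := fun t ht => ((hdz t ht).2).continuousAt.continuousWithinAt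
  have hyc : ContinuousOn y (Ici 0) := fun t ht => ((hdy t ht).2).continuousAt.continuousWithinAt
  have hwc : ContinuousOn w (Ici 0) := fun t ht => ((hdw t ht).2).continuousAt.continuousWithinAt
  -- the "energy" function S and the Lyapunov function Vf
  set S : ℝ → ℝ := fun t => ⟪x t - z t, x t - z t⟫ + ⟪y t - w t, y t - w t⟫ with hSdef
  clear_value S
  set Vf : EuclideanSpace ℝ (Fin n) → EuclideanSpace ℝ (Fin m) → ℝ → ℝ :=
    fun p q t => ⟪x t - p, x t - p⟫ + ⟪z t - p, z t - p⟫ +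
      ⟪y t - q, y t - q⟫ + ⟪w t - q, w t - q⟫ with hVfdef
  clear_value Vf
  have hS0 : ∀ t, 0 ≤ S t := by
    intro t
    rw [hSdef]
    exact add_nonneg real_inner_self_nonneg real_inner_self_nonneg
  have hVf0 : ∀ p q t, 0 ≤ Vf p q t := by
    intro p q t
    rw [hVfdef]
    exact add_nonneg (add_nonneg (add_nonneg real_inner_self_nonneg real_inner_self_nonneg)
      real_inner_self_nonneg) real_inner_self_nonneg
  have hScont : ContinuousOn S (Ici 0) := by
    rw [hSdef]
    apply ContinuousOn.add
    · exact ContinuousOn.inner (hxc.sub hzc) (hxc.sub hzc)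
    · exact ContinuousOn.inner (hyc.sub hwc) (hyc.sub hwc)
  -- basic variational inequalities for t ≥ 0
  have hvix : ∀ t, 0 ≤ t → ∀ p ∈ K,
      ⟪dx t, x t - p⟫ ≤ ⟪-(G (x t, y t)) - ρ⁻¹ • (x t - z t), x t - p⟫ := by
    intro t ht p hp
    exact vi_flip (((hdx t ht).1).inner_le hKne hKcl hKcv hp)
  have hviz : ∀ t, 0 ≤ t → ∀ p ∈ K,
      ⟪dz t, z t - p⟫ ≤ ⟪ρ⁻¹ • (x t - z t), z t - p⟫ := by
    intro t ht p hp
    exact vi_flip (((hdz t ht).1).inner_le hKne hKcl hKcv hp)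
  have hviy : ∀ t, 0 ≤ t → ∀ q ∈ V,
      ⟪dy t, y t - q⟫ ≤ ⟪(H (x t, y t)) - ρ⁻¹ • (y t - w t), y t - q⟫ := by
    intro t ht q hq
    exact vi_flip (((hdy t ht).1).inner_le hVne hVcl hVcv hq)
  have hviw : ∀ t, 0 ≤ t → ∀ q ∈ V,
      ⟪dw t, w t - q⟫ ≤ ⟪ρ⁻¹ • (y t - w t), w t - q⟫ := by
    intro t ht q hq
    exact vi_flip (((hdw t ht).1).inner_le hVne hVcl hVcv hq)
  -- derivative of Vf
  have hVfd : ∀ p q, ∀ t ∈ Ici (0:ℝ), HasDerivAt (Vf p q)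
      (2 * ⟪dx t, x t - p⟫ + 2 * ⟪dz t, z t - p⟫ +
       2 * ⟪dy t, y t - q⟫ + 2 * ⟪dw t, w t - q⟫) t := by
    intro p q t ht
    simp only [hVfdef]
    exact ((((hasDerivAt_inner_self' (((hdx t ht).2).sub_const p)).add
      (hasDerivAt_inner_self' (((hdz t ht).2).sub_const p))).add
      (hasDerivAt_inner_self' (((hdy t ht).2).sub_const q))).add
      (hasDerivAt_inner_self' (((hdw t ht).2).sub_const q)))
  -- the Lyapunov decrease inequality
  have hlya : ∀ (p : EuclideanSpace ℝ (Fin n)) (q : EuclideanSpace ℝ (Fin m)),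
      p ∈ K → q ∈ V → (∀ x' ∈ K, ∀ y' ∈ V, L p y' ≤ L p q ∧ L p q ≤ L x' q) →
      ∀ s t : ℝ, 0 ≤ s → s ≤ t →
      Vf p q t - Vf p q s ≤ (-(2 * ρ⁻¹)) * ∫ u in s..t, S u := by
    intro p q hpK hqV hpq s t hs hst
    have h := sub_le_integral_of_deriv_le
      (f := Vf p q)
      (f' := fun t => 2 * ⟪dx t, x t - p⟫ + 2 * ⟪dz t, z t - p⟫ +
        2 * ⟪dy t, y t - q⟫ + 2 * ⟪dw t, w t - q⟫)
      (g := fun u => (-(2 * ρ⁻¹)) * S u)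
      (hVfd p q) (continuousOn_const.mul hScont) ?_ hs hst
    · rwa [intervalIntegral.integral_const_mul] at h
    · intro t ht
      have ht' : (0:ℝ) ≤ t := le_of_lt ht
      have c1 := hvix t ht' p hpK
      have c2 := hviz t ht' p hpK
      have c3 := hviy t ht' q hqV
      have c4 := hviw t ht' q hqV
      have e1 : ⟪-(G (x t, y t)) - ρ⁻¹ • (x t - z t), x t - p⟫
          = -⟪G (x t, y t), x t - p⟫ - ρ⁻¹ * ⟪x t - z t, x t - p⟫ := by
        rw [inner_sub_left, inner_neg_left, real_inner_smul_left]
      have e2 : ⟪ρ⁻¹ • (x t - z t), z t - p⟫ = ρ⁻¹ * ⟪x t - z t, z t - p⟫ :=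
        real_inner_smul_left _ _ _
      have e3 : ⟪(H (x t, y t)) - ρ⁻¹ • (y t - w t), y t - q⟫
          = ⟪H (x t, y t), y t - q⟫ - ρ⁻¹ * ⟪y t - w t, y t - q⟫ := by
        rw [inner_sub_left, real_inner_smul_left]
      have e4 : ⟪ρ⁻¹ • (y t - w t), w t - q⟫ = ρ⁻¹ * ⟪y t - w t, w t - q⟫ :=
        real_inner_smul_left _ _ _
      have e5 : ⟪x t - z t, z t - p⟫ - ⟪x t - z t, x t - p⟫ = -⟪x t - z t, x t - z t⟫ := by
        rw [← inner_sub_right, show (z t - p) - (x t - p) = -(x t - z t) by abel,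
          inner_neg_right]
      have e6 : ⟪y t - w t, w t - q⟫ - ⟪y t - w t, y t - q⟫ = -⟪y t - w t, y t - w t⟫ := by
        rw [← inner_sub_right, show (w t - q) - (y t - q) = -(y t - w t) by abel,
          inner_neg_right]
      -- convexity and concavity
      have c6 : L (x t) (y t) + ⟪G (x t, y t), p - x t⟫ ≤ L p (y t) :=
        (hconv (y t)).inner_grad_le (hGgrad (x t) (y t)) p
      have c7 : L (x t) q ≤ L (x t) (y t) + ⟪H (x t, y t), q - y t⟫ :=
        (hconc (x t)).inner_grad_ge (hHgrad (x t) (y t)) q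
      have e7 : ⟪G (x t, y t), p - x t⟫ = -⟪G (x t, y t), x t - p⟫ := by
        rw [show p - x t = -(x t - p) by abel, inner_neg_right]
      have e8 : ⟪H (x t, y t), q - y t⟫ = -⟪H (x t, y t), y t - q⟫ := by
        rw [show q - y t = -(y t - q) by abel, inner_neg_right]
      have c8 := hpq (x t) (hxK t ht') (y t) (hyV t ht')
      have hρinv : (0:ℝ) ≤ ρ⁻¹ := le_of_lt (inv_pos.2 hρ)
      rw [e1] at c1
      rw [e2] at c2
      rw [e3] at c3
      rw [e4] at c4
      rw [e7] at c6
      rw [e8] at c7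
      have hmul1 : ρ⁻¹ * ⟪x t - z t, z t - p⟫ - ρ⁻¹ * ⟪x t - z t, x t - p⟫
          = -(ρ⁻¹ * ⟪x t - z t, x t - z t⟫) := by
        rw [← mul_sub, e5]; ring
      have hmul2 : ρ⁻¹ * ⟪y t - w t, w t - q⟫ - ρ⁻¹ * ⟪y t - w t, y t - q⟫
          = -(ρ⁻¹ * ⟪y t - w t, y t - w t⟫) := by
        rw [← mul_sub, e6]; ring
      simp only [hSdef]
      nlinarith [c8.1, c8.2, c1, c2, c3, c4, c6, c7, hmul1, hmul2]
  -- instantiate at the given saddle point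
  have hIneq : ∀ s t : ℝ, 0 ≤ s → s ≤ t →
      Vf a b t + (2 * ρ⁻¹) * ∫ u in s..t, S u ≤ Vf a b s := by
    intro s t hs hst
    have := hlya a b habK hbV hsp s t hs hst
    linarith
  set C0 : ℝ := Vf a b 0 with hC0
  clear_value C0
  have hC0nn : 0 ≤ C0 := hC0 ▸ hVf0 a b 0
  have hρinv : (0:ℝ) < ρ⁻¹ := inv_pos.2 hρ
  have hintSnn : ∀ s t : ℝ, s ≤ t → 0 ≤ ∫ u in s..t, S u := by
    intro s t hst
    apply intervalIntegral.integral_nonneg hst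
    intro u _
    exact hS0 u
  have hVbd : ∀ t, 0 ≤ t → Vf a b t ≤ C0 := by
    intro t ht
    have h1 := hIneq 0 t le_rfl ht
    rw [← hC0] at h1
    have h2 := hintSnn 0 t ht
    have h3 := mul_nonneg (mul_nonneg (by norm_num : (0:ℝ) ≤ 2) (le_of_lt hρinv)) h2
    linarith
  have hIntS : ∀ T ∈ Ici (0:ℝ), (∫ u in (0:ℝ)..T, S u) ≤ ρ / 2 * C0 := by
    intro T hT
    have h1 := hIneq 0 T le_rfl hT
    rw [← hC0] at h1
    have h2 := hVf0 a b T
    have h3 : (2 * ρ⁻¹) * ∫ u in (0:ℝ)..T, S u ≤ C0 := by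
      have h4 := hintSnn 0 T hT
      nlinarith [h1, h2]
    have h4 : (ρ/2) * ((2 * ρ⁻¹) * ∫ u in (0:ℝ)..T, S u) ≤ (ρ/2) * C0 :=
      mul_le_mul_of_nonneg_left h3 (by linarith)
    calc (∫ u in (0:ℝ)..T, S u) = (ρ/2) * ((2 * ρ⁻¹) * ∫ u in (0:ℝ)..T, S u) := by
          field_simp
      _ ≤ ρ / 2 * C0 := h4
  -- norm bounds on the trajectories
  set R : ℝ := Real.sqrt C0 with hRdef
  have hRnn : 0 ≤ R := Real.sqrt_nonneg _
  have hkeyR : ∀ r : ℝ, 0 ≤ r → r ^ 2 ≤ C0 → r ≤ R := by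
    intro r hr h
    rw [hRdef]
    have := Real.sqrt_le_sqrt h
    rwa [Real.sqrt_sq hr] at this
  have hsub : ∀ t, 0 ≤ t → ‖x t - a‖ ≤ R ∧ ‖z t - a‖ ≤ R ∧ ‖y t - b‖ ≤ R ∧ ‖w t - b‖ ≤ R := by
    intro t ht
    have h := hVbd t ht
    simp only [hVfdef] at h
    rw [real_inner_self_eq_norm_sq, real_inner_self_eq_norm_sq, real_inner_self_eq_norm_sq,
      real_inner_self_eq_norm_sq] at h
    refine ⟨hkeyR _ (norm_nonneg _) ?_, hkeyR _ (norm_nonneg _) ?_,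
      hkeyR _ (norm_nonneg _) ?_, hkeyR _ (norm_nonneg _) ?_⟩ <;>
      nlinarith [sq_nonneg ‖x t - a‖, sq_nonneg ‖z t - a‖, sq_nonneg ‖y t - b‖,
        sq_nonneg ‖w t - b‖]
  set Rx : ℝ := ‖a‖ + R with hRxdef
  set Ry : ℝ := ‖b‖ + R with hRydef
  have hRxnn : 0 ≤ Rx := add_nonneg (norm_nonneg _) hRnn
  have hRynn : 0 ≤ Ry := add_nonneg (norm_nonneg _) hRnn
  have hxbd : ∀ t, 0 ≤ t → ‖x t‖ ≤ Rx := by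
    intro t ht
    have h1 := (hsub t ht).1
    calc ‖x t‖ = ‖(x t - a) + a‖ := by rw [sub_add_cancel]
      _ ≤ ‖x t - a‖ + ‖a‖ := norm_add_le _ _
      _ ≤ Rx := by rw [hRxdef]; linarith
  have hzbd : ∀ t, 0 ≤ t → ‖z t‖ ≤ Rx := by
    intro t ht
    have h1 := (hsub t ht).2.1
    calc ‖z t‖ = ‖(z t - a) + a‖ := by rw [sub_add_cancel]
      _ ≤ ‖z t - a‖ + ‖a‖ := norm_add_le _ _
      _ ≤ Rx := by rw [hRxdef]; linarith
  have hybd : ∀ t, 0 ≤ t → ‖y t‖ ≤ Ry := by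
    intro t ht
    have h1 := (hsub t ht).2.2.1
    calc ‖y t‖ = ‖(y t - b) + b‖ := by rw [sub_add_cancel]
      _ ≤ ‖y t - b‖ + ‖b‖ := norm_add_le _ _
      _ ≤ Ry := by rw [hRydef]; linarith
  have hwbd : ∀ t, 0 ≤ t → ‖w t‖ ≤ Ry := by
    intro t ht
    have h1 := (hsub t ht).2.2.2
    calc ‖w t‖ = ‖(w t - b) + b‖ := by rw [sub_add_cancel]
      _ ≤ ‖w t - b‖ + ‖b‖ := norm_add_le _ _
      _ ≤ Ry := by rw [hRydef]; linarith
  -- bound on the gradients along the trajectory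
  set CB : Set (EuclideanSpace ℝ (Fin n) × EuclideanSpace ℝ (Fin m)) :=
    (Metric.closedBall 0 Rx) ×ˢ (Metric.closedBall 0 Ry) with hCBdef
  have hCBcomp : IsCompact CB := (isCompact_closedBall _ _).prod (isCompact_closedBall _ _)
  obtain ⟨CG, hCG⟩ := hCBcomp.exists_bound_of_continuousOn hGcont.continuousOn
  obtain ⟨CH, hCH⟩ := hCBcomp.exists_bound_of_continuousOn hHcont.continuousOn
  have h00CB : ((0,0) : EuclideanSpace ℝ (Fin n) × EuclideanSpace ℝ (Fin m)) ∈ CB :=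
    Set.mem_prod.2 ⟨Metric.mem_closedBall_self hRxnn, Metric.mem_closedBall_self hRynn⟩
  have hCGnn : 0 ≤ CG := le_trans (norm_nonneg _) (hCG _ h00CB)
  have hCHnn : 0 ≤ CH := le_trans (norm_nonneg _) (hCH _ h00CB)
  have hmemCB : ∀ t, 0 ≤ t → (x t, y t) ∈ CB := fun t ht =>
    Set.mem_prod.2 ⟨mem_closedBall_zero_iff.2 (hxbd t ht), mem_closedBall_zero_iff.2 (hybd t ht)⟩
  have hxz2R : ∀ t, 0 ≤ t → ‖x t - z t‖ ≤ 2 * Rx := by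
    intro t ht
    calc ‖x t - z t‖ ≤ ‖x t‖ + ‖z t‖ := norm_sub_le _ _
      _ ≤ 2 * Rx := by linarith [hxbd t ht, hzbd t ht]
  have hyw2R : ∀ t, 0 ≤ t → ‖y t - w t‖ ≤ 2 * Ry := by
    intro t ht
    calc ‖y t - w t‖ ≤ ‖y t‖ + ‖w t‖ := norm_sub_le _ _
      _ ≤ 2 * Ry := by linarith [hybd t ht, hwbd t ht]
  set M0 : ℝ := (CG + CH) + ρ⁻¹ * (2 * Rx + 2 * Ry) + 1 with hM0def
  have hM0pos : (0:ℝ) < M0 := by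
    have : 0 ≤ ρ⁻¹ * (2 * Rx + 2 * Ry) := by positivity
    rw [hM0def]; linarith
  have hρRx : 0 ≤ ρ⁻¹ * (2 * Rx) := by positivity
  have hρRy : 0 ≤ ρ⁻¹ * (2 * Ry) := by positivity
  have hdxbd : ∀ t, 0 ≤ t → ‖dx t‖ ≤ M0 := by
    intro t ht
    have h1 := ((hdx t ht).1).norm_le hKne hKcl hKcv
    have h2 : ‖-(G (x t, y t)) - ρ⁻¹ • (x t - z t)‖ ≤ CG + ρ⁻¹ * (2 * Rx) := by
      calc ‖-(G (x t, y t)) - ρ⁻¹ • (x t - z t)‖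
          ≤ ‖-(G (x t, y t))‖ + ‖ρ⁻¹ • (x t - z t)‖ := norm_sub_le _ _
        _ = ‖G (x t, y t)‖ + ρ⁻¹ * ‖x t - z t‖ := by
            rw [norm_neg, norm_smul, Real.norm_eq_abs, abs_of_pos hρinv]
        _ ≤ CG + ρ⁻¹ * (2 * Rx) := by
            have := hCG _ (hmemCB t ht)
            have := mul_le_mul_of_nonneg_left (hxz2R t ht) (le_of_lt hρinv)
            linarith
    rw [hM0def]
    have : 0 ≤ ρ⁻¹ * (2 * Ry) := by positivity
    linarith
  have hdzS : ∀ t, 0 ≤ t → ‖dz t‖ ≤ ρ⁻¹ * ‖x t - z t‖ := by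
    intro t ht
    have h1 := ((hdz t ht).1).norm_le hKne hKcl hKcv
    rwa [norm_smul, Real.norm_eq_abs, abs_of_pos hρinv] at h1
  have hdzbd : ∀ t, 0 ≤ t → ‖dz t‖ ≤ M0 := by
    intro t ht
    have := le_trans (hdzS t ht) (mul_le_mul_of_nonneg_left (hxz2R t ht) (le_of_lt hρinv))
    rw [hM0def]
    have h2 : 0 ≤ ρ⁻¹ * (2 * Ry) := by positivity
    linarith
  have hdybd : ∀ t, 0 ≤ t → ‖dy t‖ ≤ M0 := by
    intro t ht
    have h1 := ((hdy t ht).1).norm_le hVne hVcl hVcv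
    have h2 : ‖(H (x t, y t)) - ρ⁻¹ • (y t - w t)‖ ≤ CH + ρ⁻¹ * (2 * Ry) := by
      calc ‖(H (x t, y t)) - ρ⁻¹ • (y t - w t)‖
          ≤ ‖H (x t, y t)‖ + ‖ρ⁻¹ • (y t - w t)‖ := norm_sub_le _ _
        _ = ‖H (x t, y t)‖ + ρ⁻¹ * ‖y t - w t‖ := by
            rw [norm_smul, Real.norm_eq_abs, abs_of_pos hρinv]
        _ ≤ CH + ρ⁻¹ * (2 * Ry) := by
            have := hCH _ (hmemCB t ht)
            have := mul_le_mul_of_nonneg_left (hyw2R t ht) (le_of_lt hρinv)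
            linarith
    rw [hM0def]
    linarith
  have hdwS : ∀ t, 0 ≤ t → ‖dw t‖ ≤ ρ⁻¹ * ‖y t - w t‖ := by
    intro t ht
    have h1 := ((hdw t ht).1).norm_le hVne hVcl hVcv
    rwa [norm_smul, Real.norm_eq_abs, abs_of_pos hρinv] at h1
  have hdwbd : ∀ t, 0 ≤ t → ‖dw t‖ ≤ M0 := by
    intro t ht
    have := le_trans (hdwS t ht) (mul_le_mul_of_nonneg_left (hyw2R t ht) (le_of_lt hρinv))
    rw [hM0def]
    linarith
  -- S is Lipschitz on [0, ∞)
  set S' : ℝ → ℝ := fun t => 2 * ⟪dx t - dz t, x t - z t⟫ + 2 * ⟪dy t - dw t, y t - w t⟫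
    with hS'def
  have hSd : ∀ t ∈ Ici (0:ℝ), HasDerivAt S (S' t) t := by
    intro t ht
    simp only [hSdef, hS'def]
    exact (hasDerivAt_inner_self' (((hdx t ht).2).sub ((hdz t ht).2))).add
      (hasDerivAt_inner_self' (((hdy t ht).2).sub ((hdw t ht).2)))
  set MS : ℝ := 2 * (2 * M0) * (2 * Rx) + 2 * (2 * M0) * (2 * Ry) + 1 with hMSdef
  have hMSpos : (0:ℝ) < MS := by
    have h1 : 0 ≤ 2 * (2 * M0) * (2 * Rx) := by positivity
    have h2 : 0 ≤ 2 * (2 * M0) * (2 * Ry) := by positivity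
    rw [hMSdef]; linarith
  have hS'bd : ∀ t ∈ Ici (0:ℝ), ‖S' t‖ ≤ MS := by
    intro t ht
    have b1 : |⟪dx t - dz t, x t - z t⟫| ≤ (2 * M0) * (2 * Rx) := by
      calc |⟪dx t - dz t, x t - z t⟫| ≤ ‖dx t - dz t‖ * ‖x t - z t‖ :=
            abs_real_inner_le_norm _ _
        _ ≤ (2 * M0) * (2 * Rx) := by
            apply mul_le_mul ?_ (hxz2R t ht) (norm_nonneg _) (by positivity)
            calc ‖dx t - dz t‖ ≤ ‖dx t‖ + ‖dz t‖ := norm_sub_le _ _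
              _ ≤ 2 * M0 := by linarith [hdxbd t ht, hdzbd t ht]
    have b2 : |⟪dy t - dw t, y t - w t⟫| ≤ (2 * M0) * (2 * Ry) := by
      calc |⟪dy t - dw t, y t - w t⟫| ≤ ‖dy t - dw t‖ * ‖y t - w t‖ :=
            abs_real_inner_le_norm _ _
        _ ≤ (2 * M0) * (2 * Ry) := by
            apply mul_le_mul ?_ (hyw2R t ht) (norm_nonneg _) (by positivity)
            calc ‖dy t - dw t‖ ≤ ‖dy t‖ + ‖dw t‖ := norm_sub_le _ _
              _ ≤ 2 * M0 := by linarith [hdybd t ht, hdwbd t ht]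
    rw [Real.norm_eq_abs, hMSdef]
    calc |S' t| ≤ 2 * |⟪dx t - dz t, x t - z t⟫| + 2 * |⟪dy t - dw t, y t - w t⟫| := by
          rw [hS'def]
          calc |2 * ⟪dx t - dz t, x t - z t⟫ + 2 * ⟪dy t - dw t, y t - w t⟫|
              ≤ |2 * ⟪dx t - dz t, x t - z t⟫| + |2 * ⟪dy t - dw t, y t - w t⟫| := abs_add_le _ _
            _ = 2 * |⟪dx t - dz t, x t - z t⟫| + 2 * |⟪dy t - dw t, y t - w t⟫| := by
                rw [abs_mul, abs_mul]; norm_num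
      _ ≤ 2 * (2 * M0) * (2 * Rx) + 2 * (2 * M0) * (2 * Ry) + 1 := by linarith
  have hSlip : ∀ s ∈ Ici (0:ℝ), ∀ t ∈ Ici (0:ℝ), |S t - S s| ≤ MS * |t - s| := by
    intro s hs t ht
    have := (convex_Ici (0:ℝ)).norm_image_sub_le_of_norm_hasDerivWithin_le
      (fun u hu => (hSd u hu).hasDerivWithinAt) (fun u hu => hS'bd u hu) hs ht
    simpa [Real.norm_eq_abs] using this
  -- Barbalat: S → 0
  have hStend : Tendsto S atTop (nhds 0) :=
    barbalat hMSpos (fun t _ => hS0 t) hScont hSlip hIntS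
  have hsqrtS : Tendsto (fun t => Real.sqrt (S t)) atTop (nhds 0) := by
    have := (Real.continuous_sqrt.tendsto 0).comp hStend
    simpa [Function.comp_def] using this
  have hxzsq : ∀ t, ‖x t - z t‖ ≤ Real.sqrt (S t) := by
    intro t
    have h1 : ‖x t - z t‖ ^ 2 ≤ S t := by
      simp only [hSdef]
      rw [← real_inner_self_eq_norm_sq]
      linarith [(real_inner_self_nonneg : (0:ℝ) ≤ ⟪y t - w t, y t - w t⟫)]
    calc ‖x t - z t‖ = Real.sqrt (‖x t - z t‖ ^ 2) := (Real.sqrt_sq (norm_nonneg _)).symm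
      _ ≤ Real.sqrt (S t) := Real.sqrt_le_sqrt h1
  have hywsq : ∀ t, ‖y t - w t‖ ≤ Real.sqrt (S t) := by
    intro t
    have h1 : ‖y t - w t‖ ^ 2 ≤ S t := by
      simp only [hSdef]
      rw [← real_inner_self_eq_norm_sq]
      linarith [(real_inner_self_nonneg : (0:ℝ) ≤ ⟪x t - z t, x t - z t⟫)]
    calc ‖y t - w t‖ = Real.sqrt (‖y t - w t‖ ^ 2) := (Real.sqrt_sq (norm_nonneg _)).symm
      _ ≤ Real.sqrt (S t) := Real.sqrt_le_sqrt h1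
  have hxzt : Tendsto (fun t => ‖x t - z t‖) atTop (nhds 0) :=
    squeeze_zero (fun t => norm_nonneg _) hxzsq hsqrtS
  have hywt : Tendsto (fun t => ‖y t - w t‖) atTop (nhds 0) :=
    squeeze_zero (fun t => norm_nonneg _) hywsq hsqrtS
  -- compactness: extract a convergent subsequence along integer times
  have hseqmem : ∀ k : ℕ, (x (k:ℝ), z (k:ℝ), y (k:ℝ), w (k:ℝ)) ∈
      (Metric.closedBall (0 : EuclideanSpace ℝ (Fin n)) Rx) ×ˢ
      ((Metric.closedBall (0 : EuclideanSpace ℝ (Fin n)) Rx) ×ˢ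
      ((Metric.closedBall (0 : EuclideanSpace ℝ (Fin m)) Ry) ×ˢ
      (Metric.closedBall (0 : EuclideanSpace ℝ (Fin m)) Ry))) := by
    intro k
    have hk : (0:ℝ) ≤ (k:ℝ) := Nat.cast_nonneg k
    simp only [Set.mem_prod, mem_closedBall_zero_iff]
    exact ⟨hxbd _ hk, hzbd _ hk, hybd _ hk, hwbd _ hk⟩
  have hCCcomp : IsCompact ((Metric.closedBall (0 : EuclideanSpace ℝ (Fin n)) Rx) ×ˢ
      ((Metric.closedBall (0 : EuclideanSpace ℝ (Fin n)) Rx) ×ˢ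
      ((Metric.closedBall (0 : EuclideanSpace ℝ (Fin m)) Ry) ×ˢ
      (Metric.closedBall (0 : EuclideanSpace ℝ (Fin m)) Ry)))) :=
    (isCompact_closedBall _ _).prod ((isCompact_closedBall _ _).prod
      ((isCompact_closedBall _ _).prod (isCompact_closedBall _ _)))
  obtain ⟨⟨xb, zb, yb, wb⟩, _, φ, hφmono, hφtend⟩ := hCCcomp.tendsto_subseq hseqmem
  set tk : ℕ → ℝ := fun k => ((φ k : ℕ) : ℝ) with htkdef
  have htk0 : ∀ k, 0 ≤ tk k := fun k => Nat.cast_nonneg _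
  have htktop : Tendsto tk atTop atTop :=
    tendsto_natCast_atTop_atTop.comp hφmono.tendsto_atTop
  have h4 : Tendsto (fun k => (x (tk k), z (tk k), y (tk k), w (tk k))) atTop
      (nhds (xb, zb, yb, wb)) := hφtend
  have hxtk : Tendsto (fun k => x (tk k)) atTop (nhds xb) := by
    have := (continuous_fst.tendsto (xb, zb, yb, wb)).comp h4
    simpa [Function.comp_def] using this
  have hztk : Tendsto (fun k => z (tk k)) atTop (nhds zb) := by
    have := ((continuous_fst.comp continuous_snd).tendsto (xb, zb, yb, wb)).comp h4
    simpa [Function.comp_def] using this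
  have hytk : Tendsto (fun k => y (tk k)) atTop (nhds yb) := by
    have := ((continuous_fst.comp (continuous_snd.comp continuous_snd)).tendsto
      (xb, zb, yb, wb)).comp h4
    simpa [Function.comp_def] using this
  have hwtk : Tendsto (fun k => w (tk k)) atTop (nhds wb) := by
    have := ((continuous_snd.comp (continuous_snd.comp continuous_snd)).tendsto
      (xb, zb, yb, wb)).comp h4
    simpa [Function.comp_def] using this
  have hzbeq : xb = zb := by
    have h1 : Tendsto (fun k => ‖x (tk k) - z (tk k)‖) atTop (nhds ‖xb - zb‖) :=
      (hxtk.sub hztk).norm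
    have h2 : Tendsto (fun k => ‖x (tk k) - z (tk k)‖) atTop (nhds 0) := hxzt.comp htktop
    have h3 := tendsto_nhds_unique h1 h2
    have h5 := norm_eq_zero.1 h3
    rwa [sub_eq_zero] at h5
  have hwbeq : yb = wb := by
    have h1 : Tendsto (fun k => ‖y (tk k) - w (tk k)‖) atTop (nhds ‖yb - wb‖) :=
      (hytk.sub hwtk).norm
    have h2 : Tendsto (fun k => ‖y (tk k) - w (tk k)‖) atTop (nhds 0) := hywt.comp htktop
    have h3 := tendsto_nhds_unique h1 h2
    have h5 := norm_eq_zero.1 h3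
    rwa [sub_eq_zero] at h5
  subst hzbeq
  subst hwbeq
  have hxbK : xb ∈ K :=
    hKcl.mem_of_tendsto hxtk (Eventually.of_forall (fun k => hxK _ (htk0 k)))
  have hybV : yb ∈ V :=
    hVcl.mem_of_tendsto hytk (Eventually.of_forall (fun k => hyV _ (htk0 k)))
  -- eventual bounds on ‖x - z‖ and ‖y - w‖
  have hxz_ev : ∀ η : ℝ, 0 < η → ∃ T : ℝ, 0 ≤ T ∧ ∀ u, T ≤ u → ‖x u - z u‖ ≤ η := by
    intro η hη
    obtain ⟨N, hN⟩ := Metric.tendsto_atTop.1 hxzt η hη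
    refine ⟨max N 0, le_max_right _ _, fun u hu => ?_⟩
    have := hN u (le_trans (le_max_left _ _) hu)
    rw [Real.dist_eq, sub_zero, abs_of_nonneg (norm_nonneg _)] at this
    linarith
  have hyw_ev : ∀ η : ℝ, 0 < η → ∃ T : ℝ, 0 ≤ T ∧ ∀ u, T ≤ u → ‖y u - w u‖ ≤ η := by
    intro η hη
    obtain ⟨N, hN⟩ := Metric.tendsto_atTop.1 hywt η hη
    refine ⟨max N 0, le_max_right _ _, fun u hu => ?_⟩
    have := hN u (le_trans (le_max_left _ _) hu)
    rw [Real.dist_eq, sub_zero, abs_of_nonneg (norm_nonneg _)] at this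
    linarith
  -- window claims
  have hwinz : ∀ ε : ℝ, 0 < ε → ∀ᶠ k in atTop,
      ∀ s ∈ Icc (tk k) (tk k + 1), ‖z s - xb‖ ≤ ε := by
    intro ε hε
    obtain ⟨T, hT0, hT⟩ := hxz_ev (ρ * ε / 4) (by positivity)
    have hev1 : ∀ᶠ k in atTop, T ≤ tk k := htktop.eventually_ge_atTop T
    have hev2 : ∀ᶠ k in atTop, ‖z (tk k) - xb‖ ≤ ε / 2 := by
      obtain ⟨N, hN⟩ := Metric.tendsto_atTop.1 hztk (ε/2) (by positivity)
      rw [eventually_atTop]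
      refine ⟨N, fun k hk => ?_⟩
      have := hN k hk
      rw [dist_eq_norm] at this
      linarith
    filter_upwards [hev1, hev2] with k hk1 hk2
    intro s hs
    have hIccpos : ∀ u ∈ Icc (tk k) (tk k + 1), (0:ℝ) ≤ u :=
      fun u hu => le_trans (htk0 k) hu.1
    have hder : ∀ u ∈ Icc (tk k) (tk k + 1),
        HasDerivWithinAt z (dz u) (Icc (tk k) (tk k + 1)) u :=
      fun u hu => ((hdz u (hIccpos u hu)).2).hasDerivWithinAt
    have hbnd : ∀ u ∈ Icc (tk k) (tk k + 1), ‖dz u‖ ≤ ρ⁻¹ * (ρ * ε / 4) := by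
      intro u hu
      exact le_trans (hdzS u (hIccpos u hu))
        (mul_le_mul_of_nonneg_left (hT u (le_trans hk1 hu.1)) (le_of_lt hρinv))
    have hmv := (convex_Icc _ _).norm_image_sub_le_of_norm_hasDerivWithin_le hder hbnd
      (left_mem_Icc.2 (by linarith)) hs
    have hρε : ρ⁻¹ * (ρ * ε / 4) = ε / 4 := by
      field_simp
    have hs1 : ‖s - tk k‖ ≤ 1 := by
      rw [Real.norm_eq_abs, abs_of_nonneg (by linarith [hs.1] : (0:ℝ) ≤ s - tk k)]
      linarith [hs.2]
    have h5 : ‖z s - z (tk k)‖ ≤ ε / 4 := by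
      rw [hρε] at hmv
      calc ‖z s - z (tk k)‖ ≤ ε / 4 * ‖s - tk k‖ := hmv
        _ ≤ ε / 4 * 1 := mul_le_mul_of_nonneg_left hs1 (by positivity)
        _ = ε / 4 := by ring
    have htri : z s - xb = (z s - z (tk k)) + (z (tk k) - xb) := by abel
    calc ‖z s - xb‖ = ‖(z s - z (tk k)) + (z (tk k) - xb)‖ := by rw [← htri]
      _ ≤ ‖z s - z (tk k)‖ + ‖z (tk k) - xb‖ := norm_add_le _ _
      _ ≤ ε := by linarith
  have hwinw : ∀ ε : ℝ, 0 < ε → ∀ᶠ k in atTop,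
      ∀ s ∈ Icc (tk k) (tk k + 1), ‖w s - yb‖ ≤ ε := by
    intro ε hε
    obtain ⟨T, hT0, hT⟩ := hyw_ev (ρ * ε / 4) (by positivity)
    have hev1 : ∀ᶠ k in atTop, T ≤ tk k := htktop.eventually_ge_atTop T
    have hev2 : ∀ᶠ k in atTop, ‖w (tk k) - yb‖ ≤ ε / 2 := by
      obtain ⟨N, hN⟩ := Metric.tendsto_atTop.1 hwtk (ε/2) (by positivity)
      rw [eventually_atTop]
      refine ⟨N, fun k hk => ?_⟩
      have := hN k hk
      rw [dist_eq_norm] at this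
      linarith
    filter_upwards [hev1, hev2] with k hk1 hk2
    intro s hs
    have hIccpos : ∀ u ∈ Icc (tk k) (tk k + 1), (0:ℝ) ≤ u :=
      fun u hu => le_trans (htk0 k) hu.1
    have hder : ∀ u ∈ Icc (tk k) (tk k + 1),
        HasDerivWithinAt w (dw u) (Icc (tk k) (tk k + 1)) u :=
      fun u hu => ((hdw u (hIccpos u hu)).2).hasDerivWithinAt
    have hbnd : ∀ u ∈ Icc (tk k) (tk k + 1), ‖dw u‖ ≤ ρ⁻¹ * (ρ * ε / 4) := by
      intro u hu
      exact le_trans (hdwS u (hIccpos u hu))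
        (mul_le_mul_of_nonneg_left (hT u (le_trans hk1 hu.1)) (le_of_lt hρinv))
    have hmv := (convex_Icc _ _).norm_image_sub_le_of_norm_hasDerivWithin_le hder hbnd
      (left_mem_Icc.2 (by linarith)) hs
    have hρε : ρ⁻¹ * (ρ * ε / 4) = ε / 4 := by
      field_simp
    have hs1 : ‖s - tk k‖ ≤ 1 := by
      rw [Real.norm_eq_abs, abs_of_nonneg (by linarith [hs.1] : (0:ℝ) ≤ s - tk k)]
      linarith [hs.2]
    have h5 : ‖w s - w (tk k)‖ ≤ ε / 4 := by
      rw [hρε] at hmv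
      calc ‖w s - w (tk k)‖ ≤ ε / 4 * ‖s - tk k‖ := hmv
        _ ≤ ε / 4 * 1 := mul_le_mul_of_nonneg_left hs1 (by positivity)
        _ = ε / 4 := by ring
    have htri : w s - yb = (w s - w (tk k)) + (w (tk k) - yb) := by abel
    calc ‖w s - yb‖ = ‖(w s - w (tk k)) + (w (tk k) - yb)‖ := by rw [← htri]
      _ ≤ ‖w s - w (tk k)‖ + ‖w (tk k) - yb‖ := norm_add_le _ _
      _ ≤ ε := by linarith
  have hwinx : ∀ ε : ℝ, 0 < ε → ∀ᶠ k in atTop,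
      ∀ s ∈ Icc (tk k) (tk k + 1), ‖x s - xb‖ ≤ ε := by
    intro ε hε
    obtain ⟨T, hT0, hT⟩ := hxz_ev (ε / 2) (by positivity)
    filter_upwards [hwinz (ε/2) (by positivity), htktop.eventually_ge_atTop T]
      with k hk1 hk2 s hs
    have htri : x s - xb = (x s - z s) + (z s - xb) := by abel
    calc ‖x s - xb‖ = ‖(x s - z s) + (z s - xb)‖ := by rw [← htri]
      _ ≤ ‖x s - z s‖ + ‖z s - xb‖ := norm_add_le _ _
      _ ≤ ε := by linarith [hT s (le_trans hk2 hs.1), hk1 s hs]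
  have hwiny : ∀ ε : ℝ, 0 < ε → ∀ᶠ k in atTop,
      ∀ s ∈ Icc (tk k) (tk k + 1), ‖y s - yb‖ ≤ ε := by
    intro ε hε
    obtain ⟨T, hT0, hT⟩ := hyw_ev (ε / 2) (by positivity)
    filter_upwards [hwinw (ε/2) (by positivity), htktop.eventually_ge_atTop T]
      with k hk1 hk2 s hs
    have htri : y s - yb = (y s - w s) + (w s - yb) := by abel
    calc ‖y s - yb‖ = ‖(y s - w s) + (w s - yb)‖ := by rw [← htri]
      _ ≤ ‖y s - w s‖ + ‖w s - yb‖ := norm_add_le _ _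
      _ ≤ ε := by linarith [hT s (le_trans hk2 hs.1), hk1 s hs]
  -- limit variational inequality, x side
  have hKVI : ∀ p ∈ K, 0 ≤ ⟪-(G (xb, yb)), xb - p⟫ := by
    intro p hp
    have hvxcont : ContinuousOn (fun t => -(G (x t, y t)) - ρ⁻¹ • (x t - z t)) (Ici 0) :=
      ((hGcont.comp_continuousOn (hxc.prodMk hyc)).neg).sub
        (ContinuousOn.const_smul (hxc.sub hzc) ρ⁻¹)
    have hvxwin : ∀ ε : ℝ, 0 < ε → ∀ᶠ k in atTop, ∀ s ∈ Icc (tk k) (tk k + 1),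
        ‖(-(G (x s, y s)) - ρ⁻¹ • (x s - z s)) - (-(G (xb, yb)))‖ ≤ ε := by
      intro ε hε
      obtain ⟨δ, hδpos, hδ⟩ := Metric.continuousAt_iff.1 hGcont.continuousAt (ε/2)
        (by positivity)
      obtain ⟨T, hT0, hT⟩ := hxz_ev (ρ * ε / 4) (by positivity)
      filter_upwards [hwinx (δ/2) (by positivity), hwiny (δ/2) (by positivity),
        htktop.eventually_ge_atTop T] with k h1 h2 h3 s hs
      have hdist : dist (x s, y s) (xb, yb) < δ := by
        rw [Prod.dist_eq]
        have e1 : dist (x s) xb ≤ δ/2 := by rw [dist_eq_norm]; exact h1 s hs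
        have e2 : dist (y s) yb ≤ δ/2 := by rw [dist_eq_norm]; exact h2 s hs
        apply lt_of_le_of_lt (max_le e1 e2)
        linarith
      have hG := hδ hdist
      rw [dist_eq_norm] at hG
      have he : (-(G (x s, y s)) - ρ⁻¹ • (x s - z s)) - (-(G (xb, yb)))
          = -(G (x s, y s) - G (xb, yb)) - ρ⁻¹ • (x s - z s) := by module
      rw [he]
      calc ‖-(G (x s, y s) - G (xb, yb)) - ρ⁻¹ • (x s - z s)‖
          ≤ ‖-(G (x s, y s) - G (xb, yb))‖ + ‖ρ⁻¹ • (x s - z s)‖ := norm_sub_le _ _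
        _ = ‖G (x s, y s) - G (xb, yb)‖ + ρ⁻¹ * ‖x s - z s‖ := by
            rw [norm_neg, norm_smul, Real.norm_eq_abs, abs_of_pos hρinv]
        _ ≤ ε := by
            have h6 := hT s (le_trans h3 hs.1)
            have h7 := mul_le_mul_of_nonneg_left h6 (le_of_lt hρinv)
            have h8 : ρ⁻¹ * (ρ * ε / 4) = ε / 4 := by field_simp
            rw [h8] at h7
            linarith
    exact limit_vi (fun t ht => (hdx t ht).2) (fun t ht => hvix t ht p hp)
      hvxcont htk0 hwinx hvxwin
  -- limit variational inequality, y side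
  have hVVI : ∀ q ∈ V, 0 ≤ ⟪H (xb, yb), yb - q⟫ := by
    intro q hq
    have hvycont : ContinuousOn (fun t => (H (x t, y t)) - ρ⁻¹ • (y t - w t)) (Ici 0) :=
      (hHcont.comp_continuousOn (hxc.prodMk hyc)).sub
        (ContinuousOn.const_smul (hyc.sub hwc) ρ⁻¹)
    have hvywin : ∀ ε : ℝ, 0 < ε → ∀ᶠ k in atTop, ∀ s ∈ Icc (tk k) (tk k + 1),
        ‖((H (x s, y s)) - ρ⁻¹ • (y s - w s)) - (H (xb, yb))‖ ≤ ε := by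
      intro ε hε
      obtain ⟨δ, hδpos, hδ⟩ := Metric.continuousAt_iff.1 hHcont.continuousAt (ε/2)
        (by positivity)
      obtain ⟨T, hT0, hT⟩ := hyw_ev (ρ * ε / 4) (by positivity)
      filter_upwards [hwinx (δ/2) (by positivity), hwiny (δ/2) (by positivity),
        htktop.eventually_ge_atTop T] with k h1 h2 h3 s hs
      have hdist : dist (x s, y s) (xb, yb) < δ := by
        rw [Prod.dist_eq]
        have e1 : dist (x s) xb ≤ δ/2 := by rw [dist_eq_norm]; exact h1 s hs
        have e2 : dist (y s) yb ≤ δ/2 := by rw [dist_eq_norm]; exact h2 s hs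
        apply lt_of_le_of_lt (max_le e1 e2)
        linarith
      have hH := hδ hdist
      rw [dist_eq_norm] at hH
      have he : ((H (x s, y s)) - ρ⁻¹ • (y s - w s)) - (H (xb, yb))
          = (H (x s, y s) - H (xb, yb)) - ρ⁻¹ • (y s - w s) := by module
      rw [he]
      calc ‖(H (x s, y s) - H (xb, yb)) - ρ⁻¹ • (y s - w s)‖
          ≤ ‖H (x s, y s) - H (xb, yb)‖ + ‖ρ⁻¹ • (y s - w s)‖ := norm_sub_le _ _
        _ = ‖H (x s, y s) - H (xb, yb)‖ + ρ⁻¹ * ‖y s - w s‖ := by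
            rw [norm_smul, Real.norm_eq_abs, abs_of_pos hρinv]
        _ ≤ ε := by
            have h6 := hT s (le_trans h3 hs.1)
            have h7 := mul_le_mul_of_nonneg_left h6 (le_of_lt hρinv)
            have h8 : ρ⁻¹ * (ρ * ε / 4) = ε / 4 := by field_simp
            rw [h8] at h7
            linarith
    exact limit_vi (fun t ht => (hdy t ht).2) (fun t ht => hviy t ht q hq)
      hvycont htk0 hwiny hvywin
  -- (xb, yb) is a saddle point
  have hsadxy : IsSaddlePoint L K V xb yb := by
    refine ⟨hxbK, hybV, fun x' hx' y' hy' => ⟨?_, ?_⟩⟩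
    · have h1 := (hconc xb).inner_grad_ge (hHgrad xb yb) y'
      have h2 := hVVI y' hy'
      have e : ⟪H (xb, yb), y' - yb⟫ = -⟪H (xb, yb), yb - y'⟫ := by
        rw [show y' - yb = -(yb - y') by abel, inner_neg_right]
      rw [e] at h1
      linarith
    · have h1 := (hconv yb).inner_grad_le (hGgrad xb yb) x'
      have h2 := hKVI x' hx'
      have e : ⟪-(G (xb, yb)), xb - x'⟫ = ⟪G (xb, yb), x' - xb⟫ := by
        rw [inner_neg_left, show xb - x' = -(x' - xb) by abel, inner_neg_right]
        ring
      rw [e] at h2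
      linarith
  -- final convergence via the Lyapunov function centered at (xb, yb)
  have hmono2 : ∀ s t : ℝ, 0 ≤ s → s ≤ t → Vf xb yb t ≤ Vf xb yb s := by
    intro s t hs hst
    have h1 := hlya xb yb hxbK hybV hsadxy.2.2 s t hs hst
    have h2 := hintSnn s t hst
    have h3 := mul_nonneg (mul_nonneg (by norm_num : (0:ℝ) ≤ 2) (le_of_lt hρinv)) h2
    linarith
  have hVtk0 : Tendsto (fun k => Vf xb yb (tk k)) atTop (nhds 0) := by
    simp only [hVfdef]
    have t1 := (hxtk.sub (tendsto_const_nhds : Tendsto (fun _ : ℕ => xb) atTop (nhds xb)))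
    have t2 := (hztk.sub (tendsto_const_nhds : Tendsto (fun _ : ℕ => xb) atTop (nhds xb)))
    have t3 := (hytk.sub (tendsto_const_nhds : Tendsto (fun _ : ℕ => yb) atTop (nhds yb)))
    have t4 := (hwtk.sub (tendsto_const_nhds : Tendsto (fun _ : ℕ => yb) atTop (nhds yb)))
    have s1 : Tendsto (fun k => (⟪x (tk k) - xb, x (tk k) - xb⟫ : ℝ)) atTop
        (nhds ⟪xb - xb, xb - xb⟫) := t1.inner t1
    have s2 : Tendsto (fun k => (⟪z (tk k) - xb, z (tk k) - xb⟫ : ℝ)) atTop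
        (nhds ⟪xb - xb, xb - xb⟫) := t2.inner t2
    have s3 : Tendsto (fun k => (⟪y (tk k) - yb, y (tk k) - yb⟫ : ℝ)) atTop
        (nhds ⟪yb - yb, yb - yb⟫) := t3.inner t3
    have s4 : Tendsto (fun k => (⟪w (tk k) - yb, w (tk k) - yb⟫ : ℝ)) atTop
        (nhds ⟪yb - yb, yb - yb⟫) := t4.inner t4
    have hsum := ((s1.add s2).add s3).add s4
    simp only [sub_self, inner_zero_left, add_zero] at hsum
    exact hsum
  have hVatTop : Tendsto (fun t => Vf xb yb t) atTop (nhds 0) := by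
    rw [Metric.tendsto_atTop]
    intro ε hε
    obtain ⟨N, hN⟩ := Metric.tendsto_atTop.1 hVtk0 ε hε
    refine ⟨tk N, fun t ht => ?_⟩
    have h2 := hN N le_rfl
    rw [Real.dist_eq, sub_zero, abs_of_nonneg (hVf0 xb yb (tk N))] at h2
    have h3 := hmono2 (tk N) t (htk0 N) ht
    rw [Real.dist_eq, sub_zero, abs_of_nonneg (hVf0 xb yb t)]
    linarith
  have hsqV : Tendsto (fun t => Real.sqrt (Vf xb yb t)) atTop (nhds 0) := by
    have := (Real.continuous_sqrt.tendsto 0).comp hVatTop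
    simpa [Function.comp_def] using this
  have hVdecomp : ∀ t : ℝ, ‖x t - xb‖ ^ 2 ≤ Vf xb yb t ∧ ‖z t - xb‖ ^ 2 ≤ Vf xb yb t ∧
      ‖y t - yb‖ ^ 2 ≤ Vf xb yb t ∧ ‖w t - yb‖ ^ 2 ≤ Vf xb yb t := by
    intro t
    simp only [hVfdef]
    rw [real_inner_self_eq_norm_sq, real_inner_self_eq_norm_sq, real_inner_self_eq_norm_sq,
      real_inner_self_eq_norm_sq]
    refine ⟨?_, ?_, ?_, ?_⟩ <;>
      linarith [sq_nonneg ‖x t - xb‖, sq_nonneg ‖z t - xb‖, sq_nonneg ‖y t - yb‖,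
        sq_nonneg ‖w t - yb‖]
  have hsqle : ∀ (r : ℝ) (t : ℝ), 0 ≤ r → r ^ 2 ≤ Vf xb yb t → r ≤ Real.sqrt (Vf xb yb t) := by
    intro r t hr h
    have := Real.sqrt_le_sqrt h
    rwa [Real.sqrt_sq hr] at this
  have hxlim : Tendsto x atTop (nhds xb) := by
    rw [tendsto_iff_norm_sub_tendsto_zero]
    exact squeeze_zero (fun t => norm_nonneg _)
      (fun t => hsqle _ t (norm_nonneg _) (hVdecomp t).1) hsqV
  have hzlim : Tendsto z atTop (nhds xb) := by
    rw [tendsto_iff_norm_sub_tendsto_zero]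
    exact squeeze_zero (fun t => norm_nonneg _)
      (fun t => hsqle _ t (norm_nonneg _) (hVdecomp t).2.1) hsqV
  have hylim : Tendsto y atTop (nhds yb) := by
    rw [tendsto_iff_norm_sub_tendsto_zero]
    exact squeeze_zero (fun t => norm_nonneg _)
      (fun t => hsqle _ t (norm_nonneg _) (hVdecomp t).2.2.1) hsqV
  have hwlim : Tendsto w atTop (nhds yb) := by
    rw [tendsto_iff_norm_sub_tendsto_zero]
    exact squeeze_zero (fun t => norm_nonneg _)
      (fun t => hsqle _ t (norm_nonneg _) (hVdecomp t).2.2.2) hsqV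
  exact ⟨fun t ht => ⟨hxK t ht, hyV t ht⟩, xb, yb, hsadxy,
    hxlim.prodMk_nhds (hzlim.prodMk_nhds (hylim.prodMk_nhds hwlim))⟩
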